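/- Let k be a commutative ring and let (C', ε, δ) be a counital coassociative k-coalgebra equipped with a point, i.e. a coalgebra morphism η : k → C' (where k carries its canonical coalgebra structure ε = id, δ the canonical isomorphism k ≅ k ⊗ k). Suppose C' is free of rank 2 as a k-module and admits a basis {e', d'} with η(1) = e'. Then there exists λ ∈ k and an isomorphism of pointed k-coalgebras C' ≅ C(λ), i.e. a k-linear bijection Φ : C' → C(λ) with ε_{C(λ)}∘Φ = ε, δ_{C(λ)}∘Φ = (Φ⊗Φ)∘δ, and Φ(η(1)) = e. -/

import Mathlib

open TensorProduct

/-- The basis vector `e` of the free module `C(λ) = k × k`. -/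
def eC (k : Type*) [CommRing k] : k × k := (1, 0)

/-- The basis vector `d` of the free module `C(λ) = k × k`. -/
def dC (k : Type*) [CommRing k] : k × k := (0, 1)

/-- The counit of `C(λ)`: `ε(e) = 1`, `ε(d) = 0`. -/
def epsC (k : Type*) [CommRing k] : (k × k) →ₗ[k] k := LinearMap.fst k k k

/-- The comultiplication of `C(λ)`: `δ(e) = e⊗e`, `δ(d) = d⊗e + e⊗d + λ·(d⊗d)`. -/
noncomputable def delC (k : Type*) [CommRing k] (lam : k) :
    (k × k) →ₗ[k] (k × k) ⊗[k] (k × k) :=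
  (LinearMap.fst k k k).smulRight (eC k ⊗ₜ[k] eC k) +
    (LinearMap.snd k k k).smulRight
      (dC k ⊗ₜ[k] eC k + eC k ⊗ₜ[k] dC k + lam • (dC k ⊗ₜ[k] dC k))

/-- Let `(C', ε, δ)` be a counital coassociative `k`-coalgebra pointed
by a coalgebra morphism `η : k → C'`, and suppose `C'` is free of rank 2 with a basis
`{e', d'}` such that `η(1) = e'`.  Then there exist `λ ∈ k` and an isomorphism of pointed
`k`-coalgebras `C' ≅ C(λ)`: a `k`-linear bijection `Φ : C' → C(λ)` with
`ε_{C(λ)}∘Φ = ε`, `δ_{C(λ)}∘Φ = (Φ⊗Φ)∘δ` and `Φ(η(1)) = e`. -/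
theorem stmt19 {k C' : Type*} [CommRing k] [AddCommGroup C'] [Module k C']
    (eps' : C' →ₗ[k] k) (del' : C' →ₗ[k] C' ⊗[k] C')
    -- C' is a coassociative counital coalgebra
    (hcoassoc : ∀ v : C',
      TensorProduct.assoc k C' C' C' (LinearMap.rTensor C' del' (del' v)) =
        LinearMap.lTensor C' del' (del' v))
    (hcol : ∀ v : C', TensorProduct.lid k C' (LinearMap.rTensor C' eps' (del' v)) = v)
    (hcor : ∀ v : C', TensorProduct.rid k C' (LinearMap.lTensor C' eps' (del' v)) = v)
    -- the point η : k → C' is a coalgebra morphism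
    (η : k →ₗ[k] C')
    (hηeps : eps' (η 1) = 1)
    (hηdel : del' (η 1) = η 1 ⊗ₜ[k] η 1)
    -- C' is free of rank 2 on a basis {e', d'} with η(1) = e'
    (B : Module.Basis (Fin 2) k C') (hB : B 0 = η 1) :
    ∃ (lam : k) (Φ : C' ≃ₗ[k] k × k),
      (∀ v : C', epsC k (Φ v) = eps' v) ∧
      (∀ v : C',
        delC k lam (Φ v) =
          TensorProduct.map Φ.toLinearMap Φ.toLinearMap (del' v)) ∧
      Φ (η 1) = eC k := by
  classical
  set e : C' := η 1 with he
  set c0 : k := eps' (B 1) with hc0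
  set d : C' := B 1 - c0 • e with hd
  have heps_e : eps' e = 1 := hηeps
  have heps_d : eps' d = 0 := by
    simp [hd, map_sub, map_smul, heps_e, hc0]
  have hdel_e : del' e = e ⊗ₜ[k] e := hηdel
  have hcoord_e : B.repr e 1 = 0 := by
    rw [← hB]; simp [Module.Basis.repr_self]
  have hcoord_d : B.repr d 1 = 1 := by
    simp [hd, map_sub, map_smul, hcoord_e, Module.Basis.repr_self]
  set f : C' →ₗ[k] k × k := LinearMap.prod eps' (B.coord 1) with hf
  set g : (k × k) →ₗ[k] C' :=
    (LinearMap.fst k k k).smulRight e + (LinearMap.snd k k k).smulRight d with hg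
  have hfg : f ∘ₗ g = LinearMap.id := by
    apply LinearMap.ext
    rintro ⟨x, y⟩
    simp [hf, hg, map_add, map_smul, heps_e, heps_d, Module.Basis.coord_apply,
      hcoord_e, hcoord_d, Prod.ext_iff]
  have hgf : g ∘ₗ f = LinearMap.id := by
    apply B.ext
    intro i
    fin_cases i
    · have : B 0 = e := hB
      simp [hf, hg, this, heps_e, Module.Basis.coord_apply, hcoord_e]
    · simp [hf, hg, Module.Basis.coord_apply, Module.Basis.repr_self, hd, hc0]
  set Φ : C' ≃ₗ[k] k × k := LinearEquiv.ofLinear f g hfg hgf with hΦ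
  have hΦapply : ∀ v, Φ v = f v := fun v => rfl
  have hΦsymm : ∀ p, Φ.symm p = g p := fun p => rfl
  set B2 : Module.Basis (Fin 2) k C' := (Module.Basis.finTwoProd k).map Φ.symm with hB2
  have hB2_0 : B2 0 = e := by
    simp [hB2, Module.Basis.map_apply, Module.Basis.finTwoProd_zero, hΦsymm, hg]
  have hB2_1 : B2 1 = d := by
    simp [hB2, Module.Basis.map_apply, Module.Basis.finTwoProd_one, hΦsymm, hg]
  have hΦe : Φ e = eC k := by
    rw [← hB2_0]
    simp [hB2, Module.Basis.map_apply, eC, Module.Basis.finTwoProd_zero]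
  have hΦd : Φ d = dC k := by
    rw [← hB2_1]
    simp [hB2, Module.Basis.map_apply, dC, Module.Basis.finTwoProd_one]
  have hsum := (B2.tensorProduct B2).sum_repr (del' d)
  rw [Fintype.sum_prod_type] at hsum
  rw [Fin.sum_univ_two] at hsum
  rw [Fin.sum_univ_two, Fin.sum_univ_two] at hsum
  simp only [Module.Basis.tensorProduct_apply, hB2_0, hB2_1] at hsum
  set a : k := (B2.tensorProduct B2).repr (del' d) (0, 0) with ha0
  set c1 : k := (B2.tensorProduct B2).repr (del' d) (0, 1) with hc10
  set b : k := (B2.tensorProduct B2).repr (del' d) (1, 0) with hb0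
  set l : k := (B2.tensorProduct B2).repr (del' d) (1, 1) with hl0
  have hdec : del' d = a • (e ⊗ₜ[k] e) + c1 • (e ⊗ₜ[k] d)
      + b • (d ⊗ₜ[k] e) + l • (d ⊗ₜ[k] d) := by
    rw [← hsum]; abel
  have h1 : a • e + c1 • d = d := by
    have h := hcol d
    rw [hdec] at h
    simpa [map_add, map_smul, LinearMap.rTensor_tmul, TensorProduct.lid_tmul,
      heps_e, heps_d] using h
  have h2 : a • e + b • d = d := by
    have h := hcor d
    rw [hdec] at h
    simpa [map_add, map_smul, LinearMap.lTensor_tmul, TensorProduct.rid_tmul,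
      heps_e, heps_d] using h
  have hrepr_e : B2.repr e = Finsupp.single 0 1 := by rw [← hB2_0]; exact B2.repr_self 0
  have hrepr_d : B2.repr d = Finsupp.single 1 1 := by rw [← hB2_1]; exact B2.repr_self 1
  have ha : a = 0 := by
    have h := congrArg (fun v => B2.repr v 0) h1
    simpa [map_add, map_smul, hrepr_e, hrepr_d, Finsupp.single_apply] using h
  have hc1 : c1 = 1 := by
    have h := congrArg (fun v => B2.repr v 1) h1
    simpa [map_add, map_smul, hrepr_e, hrepr_d, Finsupp.single_apply] using h
  have hb : b = 1 := by
    have h := congrArg (fun v => B2.repr v 1) h2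
    simpa [map_add, map_smul, hrepr_e, hrepr_d, Finsupp.single_apply] using h
  have hdel_d : del' d = d ⊗ₜ[k] e + e ⊗ₜ[k] d + l • (d ⊗ₜ[k] d) := by
    rw [hdec, ha, hb, hc1]
    simp
    abel
  refine ⟨l, Φ, ?_, ?_, ?_⟩
  · intro v
    rfl
  · have key : (delC k l) ∘ₗ Φ.toLinearMap
        = (TensorProduct.map Φ.toLinearMap Φ.toLinearMap) ∘ₗ del' := by
      apply B2.ext
      intro i
      fin_cases i
      · simp only [Fin.zero_eta, Fin.mk_one, LinearMap.comp_apply, LinearEquiv.coe_coe, hB2_0, hΦe, hdel_e,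
          TensorProduct.map_tmul, hΦe]
        simp [delC, eC, dC]
      · simp only [Fin.zero_eta, Fin.mk_one, LinearMap.comp_apply, LinearEquiv.coe_coe, hB2_1, hΦd, hdel_d,
          map_add, map_smul, TensorProduct.map_tmul, hΦe, hΦd]
        simp [delC, eC, dC]
    intro v
    exact LinearMap.congr_fun key v
  · exact hΦe
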